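/- Fix integers $n \ge m \ge k \ge 1$. Let $X_1,\ldots,X_n$ be $\{0,1\}$-valued random variables such that with probability 1, either $\sum_{i=1}^n X_i = m$ or $\sum_{i=1}^n X_i < k$. Then $\Pr\left(\sum_{i=1}^n X_i \ge m\right) = \binom{m}{k}^{-1} \sum_{|S|=k} \Pr(\forall i \in S, X_i = 1)$, i.e. the Linial–Luria inequality holds with equality. -/

import Mathlib

open MeasureTheory ProbabilityTheory Finset
open scoped ENNReal

theorem stmt_7 {Ω : Type*} [MeasureSpace Ω] [IsProbabilityMeasure (ℙ : Measure Ω)]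
    (n m k : ℕ) (hnm : m ≤ n) (hmk : k ≤ m) (hk : 1 ≤ k)
    (X : Fin n → Ω → ℝ) (hX : ∀ i, Measurable (X i))
    (h01 : ∀ i ω, X i ω = 0 ∨ X i ω = 1)
    (hsum : ℙ {ω | (∑ i, X i ω) = m ∨ (∑ i, X i ω) < k} = 1) :
    ℙ {ω | (m : ℝ) ≤ ∑ i, X i ω} =
      ((Nat.choose m k : ℝ≥0∞))⁻¹ *
        ∑ S ∈ Finset.powersetCard k (Finset.univ : Finset (Fin n)),
          ℙ {ω | ∀ i ∈ S, X i ω = 1} := by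
  classical
  set T : Ω → Finset (Fin n) := fun ω => Finset.univ.filter (fun i => X i ω = 1) with hT
  have hfT : ∀ ω, (∑ i, X i ω) = ((T ω).card : ℝ) := by
    intro ω
    rw [hT, ← Finset.sum_boole]
    exact Finset.sum_congr rfl fun i _ => by rcases h01 i ω with h | h <;> simp [h]
  have hfmeas : Measurable fun ω => ∑ i, X i ω :=
    Finset.measurable_sum _ fun i _ => hX i
  have hGmeas : MeasurableSet {ω | (∑ i, X i ω) = m ∨ (∑ i, X i ω) < k} :=
    (hfmeas (measurableSet_singleton _)).union (hfmeas measurableSet_Iio)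
  have hae : ∀ᵐ ω, (T ω).card = m ∨ (T ω).card < k := by
    have h1 : ∀ᵐ ω, (∑ i, X i ω) = (m:ℝ) ∨ (∑ i, X i ω) < (k:ℝ) := by
      rw [ae_iff]
      have h2 := measure_compl hGmeas (measure_ne_top ℙ _)
      simp only [hsum, measure_univ, tsub_self] at h2
      exact h2
    filter_upwards [h1] with ω h
    rcases h with h | h
    · left; rw [hfT ω] at h; exact_mod_cast h
    · right; rw [hfT ω] at h; exact_mod_cast h
  set A : Set Ω := {ω | (∑ i, X i ω) = (m:ℝ)} with hAdef
  have hA : MeasurableSet A := hfmeas (measurableSet_singleton _)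
  have hAiff : ∀ ω, ω ∈ A ↔ (T ω).card = m := by
    intro ω
    constructor
    · intro h; rw [hAdef, Set.mem_setOf_eq, hfT ω] at h; exact_mod_cast h
    · intro h; rw [hAdef, Set.mem_setOf_eq, hfT ω]; exact_mod_cast h
  -- LHS
  have hLHS : ℙ {ω | (m : ℝ) ≤ ∑ i, X i ω} = ℙ A := by
    apply measure_congr
    rw [Filter.eventuallyEq_set]
    filter_upwards [hae] with ω h
    rw [Set.mem_setOf_eq, hfT ω, Nat.cast_le, Nat.cast_inj]
    omega
  -- B_S measurable
  have hBmeas : ∀ S : Finset (Fin n), MeasurableSet {ω | ∀ i ∈ S, X i ω = 1} := by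
    intro S
    have : {ω | ∀ i ∈ S, X i ω = 1} = ⋂ i ∈ S, (X i)⁻¹' {1} := by ext ω; simp
    rw [this]
    exact MeasurableSet.biInter S.countable_toSet fun i _ => hX i (measurableSet_singleton _)
  have hBiff : ∀ S : Finset (Fin n), ∀ ω, (∀ i ∈ S, X i ω = 1) ↔ S ⊆ T ω := by
    intro S ω
    simp [hT, Finset.subset_iff]
  -- each term
  have hterm : ∀ S ∈ Finset.powersetCard k (Finset.univ : Finset (Fin n)),
      ℙ {ω | ∀ i ∈ S, X i ω = 1} = ℙ ({ω | ∀ i ∈ S, X i ω = 1} ∩ A) := by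
    intro S hS
    rw [Finset.mem_powersetCard] at hS
    apply measure_congr
    rw [Filter.eventuallyEq_set]
    filter_upwards [hae] with ω h
    rw [Set.mem_inter_iff]
    constructor
    · intro hB
      refine ⟨hB, ?_⟩
      rw [hAiff ω]
      have hsub : S ⊆ T ω := (hBiff S ω).1 hB
      have := Finset.card_le_card hsub
      omega
    · exact fun h => h.1
  -- sum computation
  have hSum : ∑ S ∈ Finset.powersetCard k (Finset.univ : Finset (Fin n)),
      ℙ {ω | ∀ i ∈ S, X i ω = 1} = (Nat.choose m k : ℝ≥0∞) * ℙ A := by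
    rw [Finset.sum_congr rfl hterm]
    have step1 : ∀ S ∈ Finset.powersetCard k (Finset.univ : Finset (Fin n)),
        ℙ ({ω | ∀ i ∈ S, X i ω = 1} ∩ A) =
          ∫⁻ ω in A, Set.indicator {ω | ∀ i ∈ S, X i ω = 1} (fun _ => (1:ℝ≥0∞)) ω ∂ℙ := by
      intro S _
      rw [lintegral_indicator (hBmeas S), lintegral_one, Measure.restrict_restrict (hBmeas S),
        Measure.restrict_apply MeasurableSet.univ, Set.univ_inter]
    rw [Finset.sum_congr rfl step1, ← lintegral_finset_sum]
    · have step2 : ∫⁻ ω in A, (∑ S ∈ Finset.powersetCard k (Finset.univ : Finset (Fin n)),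
          Set.indicator {ω | ∀ i ∈ S, X i ω = 1} (fun _ => (1:ℝ≥0∞)) ω) ∂ℙ
          = ∫⁻ _ω in A, (Nat.choose m k : ℝ≥0∞) ∂ℙ := by
        apply setLIntegral_congr_fun hA
        intro ω hω
        beta_reduce
        have hTcard : (T ω).card = m := (hAiff ω).1 hω
        have : ∀ S ∈ Finset.powersetCard k (Finset.univ : Finset (Fin n)),
            Set.indicator {ω | ∀ i ∈ S, X i ω = 1} (fun _ => (1:ℝ≥0∞)) ω
              = if S ⊆ T ω then 1 else 0 := by
          intro S _
          rw [Set.indicator_apply]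
          simp only [Set.mem_setOf_eq, hBiff S ω]
        rw [Finset.sum_congr rfl this, Finset.sum_boole]
        have hfe : Finset.filter (fun S => S ⊆ T ω) (Finset.powersetCard k (Finset.univ : Finset (Fin n)))
            = Finset.powersetCard k (T ω) := by
          ext S
          simp only [Finset.mem_filter, Finset.mem_powersetCard, Finset.subset_univ, true_and]
          tauto
        rw [hfe, Finset.card_powersetCard, hTcard]
      rw [step2, setLIntegral_const]
    · exact fun S _ => (measurable_const.indicator (hBmeas S))
  rw [hLHS, hSum, ← mul_assoc, ENNReal.inv_mul_cancel, one_mul]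
  · exact_mod_cast (Nat.choose_pos hmk).ne'
  · exact ENNReal.natCast_ne_top _
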